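/- arXiv:1404.0528 — 3 statements merged into one kernel-verified Lean document; each statement's English description precedes it below -/
import Mathlib

section
/- Let v ≥ 5 with v ≡ 1 or 5 (mod 6). Then the multiset B of blocks {k, k + α, k − α} ⊆ ZMod v, taken over all 1 ≤ α ≤ (v−1)/2 and all k ∈ ZMod v, is a cyclic, simple, and indecomposable three-fold triple system TS_3(v): every 2-element subset of ZMod v lies in exactly 3 of these blocks, the blocks are pairwise distinct, B is invariant under the translation x ↦ x + 1, and B admits no decomposition into an STS(v) and a TS_2(v). -/
/-- A `λ`-fold triple system on `ZMod v`. -/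
def IsTS (v lam : ℕ) (B : Multiset (Finset (ZMod v))) : Prop :=
  (∀ b ∈ B, b.card = 3) ∧
  ∀ p : Finset (ZMod v), p.card = 2 → B.countP (fun b => p ⊆ b) = lam

/-- A design on `ZMod v` is cyclic if `x ↦ x + 1` maps it to itself. -/
def IsCyclicDesign (v : ℕ) (B : Multiset (Finset (ZMod v))) : Prop :=
  B.map (fun b => b.image (fun x => x + 1)) = B

/-- Kramer's blocks: `{k, k + α, k - α}` for `1 ≤ α ≤ (v-1)/2` and `k ∈ ZMod v`. -/
def kramerBlocks (v : ℕ) : Multiset (Finset (ZMod v)) :=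
  (Multiset.range v).bind fun k =>
    (Multiset.Icc 1 ((v - 1) / 2)).map fun a =>
      ({(k : ZMod v), (k : ZMod v) + (a : ZMod v), (k : ZMod v) - (a : ZMod v)} :
        Finset (ZMod v))

namespace Kramer

variable {v : ℕ}

/-- The basic block shape. -/
def blk (k α : ZMod v) : Finset (ZMod v) := {k, k + α, k - α}

lemma mem_blk {k α z : ZMod v} : z ∈ blk k α ↔ z = k ∨ z = k + α ∨ z = k - α := by
  simp [blk]

lemma blk_neg (k α : ZMod v) : blk k (-α) = blk k α := by
  ext z
  simp only [mem_blk, sub_neg_eq_add, ← sub_eq_add_neg]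
  tauto

lemma kramer_eq_bind :
    kramerBlocks v = (Multiset.range v).bind
      (fun k => (Multiset.Icc 1 ((v - 1) / 2)).map (fun a : ℕ => blk (k : ZMod v) ((a : ℕ) : ZMod v))) := by
  simp only [kramerBlocks]
  apply Multiset.bind_congr
  intro k hk
  have h : (do let a ← Multiset.Icc 1 ((v - 1) / 2); pure ((a : ZMod v)) : Multiset (ZMod v))
      = (Multiset.Icc 1 ((v - 1) / 2)).map (fun a : ℕ => (a : ZMod v)) := by
    simp [Multiset.bind_singleton]
  rw [h, Multiset.map_map]
  rfl

lemma cancel2 {u x : ZMod v} (hu : (2 : ZMod v) * u = 1) (h : 2 * x = 0) : x = 0 := by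
  linear_combination u * h - x * hu

lemma cancel3 {w x : ZMod v} (hw : (3 : ZMod v) * w = 1) (h : 3 * x = 0) : x = 0 := by
  linear_combination w * h - x * hw

lemma natCast_ne_zero {a : ℕ} (h1 : 0 < a) (h2 : a < v) : (a : ZMod v) ≠ 0 := by
  intro h
  rw [ZMod.natCast_eq_zero_iff] at h
  exact absurd (Nat.le_of_dvd h1 h) (by omega)

lemma cast_inj (hv : 0 < v) {a b : ℕ} (ha : a < v) (hb : b < v)
    (h : (a : ZMod v) = b) : a = b := by
  haveI : NeZero v := ⟨hv.ne'⟩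
  have := congrArg ZMod.val h
  rwa [ZMod.val_cast_of_lt ha, ZMod.val_cast_of_lt hb] at this

/-- folding of a nonzero residue into `[1, (v-1)/2]`. -/
lemma fold (hv : 5 ≤ v) (hodd : v % 2 = 1) (δ : ZMod v) (hδ : δ ≠ 0) :
    ∃! a, a ∈ Finset.Icc 1 ((v - 1) / 2) ∧ ((a : ZMod v) = δ ∨ (a : ZMod v) = -δ) := by
  haveI : NeZero v := ⟨by omega⟩
  have hw : ((δ.val : ℕ) : ZMod v) = δ := ZMod.natCast_rightInverse δ
  have hw1 : 0 < δ.val := by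
    rcases Nat.eq_zero_or_pos δ.val with h | h
    · exfalso; apply hδ; rw [← hw, h, Nat.cast_zero]
    · exact h
  have hw2 : δ.val < v := ZMod.val_lt δ
  -- uniqueness helper
  have huniq : ∀ a b : ℕ, a ∈ Finset.Icc 1 ((v - 1) / 2) → b ∈ Finset.Icc 1 ((v - 1) / 2) →
      ((a : ZMod v) = δ ∨ (a : ZMod v) = -δ) → ((b : ZMod v) = δ ∨ (b : ZMod v) = -δ) →
      a = b := by
    intro a b ha hb hca hcb
    rw [Finset.mem_Icc] at ha hb
    have hav : a < v := by omega
    have hbv : b < v := by omega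
    rcases hca with h1 | h1 <;> rcases hcb with h2 | h2
    · exact cast_inj (by omega) hav hbv (h1.trans h2.symm)
    · exfalso
      have : ((a + b : ℕ) : ZMod v) = 0 := by push_cast; rw [h1, h2]; ring
      rw [ZMod.natCast_eq_zero_iff] at this
      have := Nat.le_of_dvd (by omega) this
      omega
    · exfalso
      have : ((a + b : ℕ) : ZMod v) = 0 := by push_cast; rw [h1, h2]; ring
      rw [ZMod.natCast_eq_zero_iff] at this
      have := Nat.le_of_dvd (by omega) this
      omega
    · exact cast_inj (by omega) hav hbv (h1.trans h2.symm)
  by_cases hle : δ.val ≤ (v - 1) / 2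
  · refine ⟨δ.val, ⟨Finset.mem_Icc.mpr ⟨hw1, hle⟩, Or.inl hw⟩, ?_⟩
    intro b hb
    exact huniq b δ.val hb.1 (Finset.mem_Icc.mpr ⟨hw1, hle⟩) hb.2 (Or.inl hw)
  · have hmem : v - δ.val ∈ Finset.Icc 1 ((v - 1) / 2) := Finset.mem_Icc.mpr ⟨by omega, by omega⟩
    have hcast : ((v - δ.val : ℕ) : ZMod v) = -δ := by
      rw [Nat.cast_sub (le_of_lt hw2), ZMod.natCast_self, hw, zero_sub]
    refine ⟨v - δ.val, ⟨hmem, Or.inr hcast⟩, ?_⟩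
    intro b hb
    exact huniq b (v - δ.val) hb.1 hmem hb.2 (Or.inr hcast)

section Blk

variable {k k' α δ u w : ZMod v}

lemma blk_not_mem1 (hα : α ≠ 0) (h2α : 2 * α ≠ 0) : k ∉ ({k + α, k - α} : Finset (ZMod v)) := by
  simp only [Finset.mem_insert, Finset.mem_singleton]
  push_neg
  constructor
  · intro h; exact hα (by linear_combination -h)
  · intro h; exact hα (by linear_combination h)

lemma blk_not_mem2 (h2α : 2 * α ≠ 0) : k + α ∉ ({k - α} : Finset (ZMod v)) := by
  simp only [Finset.mem_singleton]
  intro h; exact h2α (by linear_combination h)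

lemma blk_card (hα : α ≠ 0) (h2α : 2 * α ≠ 0) : (blk k α).card = 3 := by
  rw [blk, Finset.card_insert_of_notMem (blk_not_mem1 hα h2α),
    Finset.card_insert_of_notMem (blk_not_mem2 h2α), Finset.card_singleton]

lemma blk_sum (hα : α ≠ 0) (h2α : 2 * α ≠ 0) : (∑ x ∈ blk k α, x) = 3 * k := by
  rw [blk, Finset.sum_insert (blk_not_mem1 hα h2α), Finset.sum_insert (blk_not_mem2 h2α),
    Finset.sum_singleton]
  ring

lemma blk_middle (hw : (3 : ZMod v) * w = 1) (hα : α ≠ 0) (h2α : 2 * α ≠ 0)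
    (hδ : δ ≠ 0) (h2δ : 2 * δ ≠ 0) (h : blk k α = blk k' δ) : k = k' := by
  have hs : (3 : ZMod v) * k = 3 * k' := by
    rw [← blk_sum hα h2α (k := k), ← blk_sum hδ h2δ (k := k'), h]
  have : (3 : ZMod v) * (k - k') = 0 := by linear_combination hs
  have := cancel3 hw this
  linear_combination this

lemma blk_param (hα : α ≠ 0) (h : blk k α = blk k δ) : α = δ ∨ α = -δ := by
  have hm : k + α ∈ blk k δ := by rw [← h, mem_blk]; exact Or.inr (Or.inl rfl)
  rw [mem_blk] at hm
  rcases hm with h1 | h1 | h1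
  · exact absurd (by linear_combination h1 : α = 0) hα
  · exact Or.inl (by linear_combination h1)
  · exact Or.inr (by linear_combination h1)

lemma ex_rep_iff (hu : (2 : ZMod v) * u = 1) (hw : (3 : ZMod v) * w = 1)
    (hα : α ≠ 0) (h2α : 2 * α ≠ 0) (hδ : δ ≠ 0) :
    (∃ k' : ZMod v, blk k α = blk k' δ) ↔ (δ = α ∨ δ = -α) := by
  have h2δ : 2 * δ ≠ 0 := fun h => hδ (cancel2 hu h)
  constructor
  · rintro ⟨k', h⟩
    have hk : k = k' := blk_middle hw hα h2α hδ h2δ h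
    subst hk
    rcases blk_param hα h with h1 | h1
    · exact Or.inl h1.symm
    · exact Or.inr (by rw [h1, neg_neg])
  · rintro (rfl | h1)
    · exact ⟨k, rfl⟩
    · exact ⟨k, by rw [h1, blk_neg]⟩

end Blk

lemma countP_bind {α β : Type*} (s : Multiset α) (f : α → Multiset β)
    (p : β → Prop) [DecidablePred p] :
    Multiset.countP p (s.bind f) = (s.map (fun a => (f a).countP p)).sum := by
  induction s using Multiset.induction_on with
  | empty => simp
  | cons a s ih => simp [Multiset.cons_bind, Multiset.countP_add, ih]

lemma sum_countP {γ β : Type*} (F : Finset γ) (s : Multiset β) (p : γ → β → Prop)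
    [∀ x, DecidablePred (p x)] :
    (∑ x ∈ F, s.countP (p x)) = (s.map (fun b => (F.filter (fun x => p x b)).card)).sum := by
  induction s using Multiset.induction_on with
  | empty => simp
  | cons b s ih =>
    simp only [Multiset.countP_cons, Multiset.map_cons, Multiset.sum_cons]
    rw [Finset.sum_add_distrib, ih, Finset.card_filter]
    ring

lemma sum_map_ite {β : Type*} (s : Multiset β) (P : β → Prop) [DecidablePred P] :
    (s.map (fun b => if P b then (1 : ℕ) else 0)).sum = s.countP P := by
  induction s using Multiset.induction_on with
  | empty => simp
  | cons b s ih => simp [Multiset.countP_cons, ih, add_comm]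

lemma range_map_cast (hv : 0 < v) [NeZero v] :
    (Multiset.range v).map (Nat.cast : ℕ → ZMod v) = (Finset.univ : Finset (ZMod v)).val := by
  have hnd : ((Multiset.range v).map (Nat.cast : ℕ → ZMod v)).Nodup := by
    refine Multiset.Nodup.map_on ?_ (Multiset.nodup_range v)
    intro a ha b hb h
    exact cast_inj hv (Multiset.mem_range.mp ha) (Multiset.mem_range.mp hb) h
  have : (⟨_, hnd⟩ : Finset (ZMod v)) = Finset.univ := by
    apply Finset.eq_univ_of_card
    simp [ZMod.card]
  exact congrArg Finset.val this


lemma card_one (hv : 5 ≤ v) (hodd : v % 2 = 1) {δ : ZMod v} (hδ : δ ≠ 0) {q : ℕ → Prop}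
    [DecidablePred q]
    (hq : ∀ a ∈ Finset.Icc 1 ((v - 1) / 2), (q a ↔ ((a : ZMod v) = δ ∨ (a : ZMod v) = -δ))) :
    ((Finset.Icc 1 ((v - 1) / 2)).filter q).card = 1 := by
  obtain ⟨a₀, ⟨ha₀, hc⟩, huniq⟩ := fold hv hodd δ hδ
  rw [Finset.card_eq_one]
  refine ⟨a₀, ?_⟩
  ext b
  simp only [Finset.mem_filter, Finset.mem_singleton]
  constructor
  · rintro ⟨hb, hqb⟩
    exact huniq b ⟨hb, (hq b hb).mp hqb⟩
  · rintro rfl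
    exact ⟨ha₀, (hq b ha₀).mpr hc⟩

lemma mem_kramer_aux (hv : 5 ≤ v) {a : ℕ} (ha1 : 1 ≤ a) (ha2 : a ≤ (v - 1) / 2) :
    (a : ZMod v) ≠ 0 :=
  natCast_ne_zero (by omega) (by omega)

lemma mem_kramer (hv : 5 ≤ v) {b : Finset (ZMod v)} (hb : b ∈ kramerBlocks v) :
    ∃ (k α : ZMod v), α ≠ 0 ∧ b = blk k α := by
  rw [kramer_eq_bind] at hb
  simp only [Multiset.mem_bind, Multiset.mem_map, Multiset.mem_Icc] at hb
  obtain ⟨k, -, a, ⟨ha1, ha2⟩, hb⟩ := hb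
  subst hb
  refine ⟨(k : ZMod v), (a : ZMod v), ?_, rfl⟩
  exact mem_kramer_aux hv ha1 ha2

lemma ite_calc {A B C D : Prop} [Decidable A] [Decidable B] [Decidable C] [Decidable D]
    (hAB : ¬(A ∧ B)) (hAC : ¬(A ∧ C)) (hAD : ¬(A ∧ D)) (hBC : ¬(B ∧ C)) (hBD : ¬(B ∧ D))
    (hCD : ¬(C ∧ D)) :
    (if A ∨ B then (1 : ℕ) else 0) + ((if B ∨ D then 1 else 0) + (if A ∨ C then 1 else 0))
      = (if A ∨ B then 2 else 0) + (if C ∨ D then 1 else 0) := by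
  by_cases hA : A <;> by_cases hB : B <;> by_cases hC : C <;> by_cases hD : D <;> simp_all

/-- the number of `x` such that both `x` and `x + δ` lie in a block. -/
lemma blk_pair_count [NeZero v] {u : ZMod v} (hu : (2 : ZMod v) * u = 1) {k α δ : ZMod v}
    (hα : α ≠ 0) (h2α : 2 * α ≠ 0) (h3α : 3 * α ≠ 0) (hδ : δ ≠ 0) :
    (Finset.univ.filter (fun x => x ∈ blk k α ∧ x + δ ∈ blk k α)).card
      = (if δ = α ∨ δ = -α then 2 else 0) + (if δ = 2 * α ∨ δ = -(2 * α) then 1 else 0) := by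
  have hfe : Finset.univ.filter (fun x => x ∈ blk k α ∧ x + δ ∈ blk k α)
      = (blk k α).filter (fun x => x + δ ∈ blk k α) := by
    ext z; simp [Finset.mem_filter]
  have hbsum : ∀ f : ZMod v → ℕ, (∑ x ∈ blk k α, f x) = f k + (f (k + α) + f (k - α)) := by
    intro f
    rw [blk, Finset.sum_insert (blk_not_mem1 hα h2α), Finset.sum_insert (blk_not_mem2 h2α),
      Finset.sum_singleton]
  rw [hfe, Finset.card_filter, hbsum]
  have M1 : (k + δ ∈ blk k α) ↔ (δ = α ∨ δ = -α) := by
    rw [mem_blk]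
    constructor
    · rintro (h | h | h)
      · exact absurd (by linear_combination h : δ = 0) hδ
      · exact Or.inl (by linear_combination h)
      · exact Or.inr (by linear_combination h)
    · rintro (h | h)
      · exact Or.inr (Or.inl (by rw [h]))
      · exact Or.inr (Or.inr (by rw [h]; ring))
  have M2 : (k + α + δ ∈ blk k α) ↔ (δ = -α ∨ δ = -(2 * α)) := by
    rw [mem_blk]
    constructor
    · rintro (h | h | h)
      · exact Or.inl (by linear_combination h)
      · exact absurd (by linear_combination h : δ = 0) hδ
      · exact Or.inr (by linear_combination h)
    · rintro (h | h)
      · exact Or.inl (by rw [h]; ring)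
      · exact Or.inr (Or.inr (by rw [h]; ring))
  have M3 : (k - α + δ ∈ blk k α) ↔ (δ = α ∨ δ = 2 * α) := by
    rw [mem_blk]
    constructor
    · rintro (h | h | h)
      · exact Or.inl (by linear_combination h)
      · exact Or.inr (by linear_combination h)
      · exact absurd (by linear_combination h : δ = 0) hδ
    · rintro (h | h)
      · exact Or.inl (by rw [h]; ring)
      · exact Or.inr (Or.inl (by rw [h]; ring))
  simp only [M1, M2, M3]
  have hAB : ¬(δ = α ∧ δ = -α) := fun ⟨p, q⟩ => h2α (by linear_combination q - p)
  have hAC : ¬(δ = α ∧ δ = 2 * α) := fun ⟨p, q⟩ => hα (by linear_combination p - q)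
  have hAD : ¬(δ = α ∧ δ = -(2 * α)) := fun ⟨p, q⟩ => h3α (by linear_combination q - p)
  have hBC : ¬(δ = -α ∧ δ = 2 * α) := fun ⟨p, q⟩ => h3α (by linear_combination p - q)
  have hBD : ¬(δ = -α ∧ δ = -(2 * α)) := fun ⟨p, q⟩ => hα (by linear_combination q - p)
  have hCD : ¬(δ = 2 * α ∧ δ = -(2 * α)) := fun ⟨p, q⟩ =>
    h2α (cancel2 hu (by linear_combination q - p))
  exact ite_calc hAB hAC hAD hBC hBD hCD


lemma count_three [NeZero v] (hv : 5 ≤ v) (hodd : v % 2 = 1) {u : ZMod v}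
    (hu : (2 : ZMod v) * u = 1) {x y : ZMod v} (hxy : x ≠ y) :
    Multiset.countP (fun b => ({x, y} : Finset (ZMod v)) ⊆ b) (kramerBlocks v) = 3 := by
  have hdne : y - x ≠ 0 := sub_ne_zero.mpr (Ne.symm hxy)
  set m : ZMod v := u * (x + y) with hm
  have hm2 : 2 * m = x + y := by rw [hm]; linear_combination (x + y) * hu
  have hmx : m ≠ x := fun h => hxy (by linear_combination hm2 - 2 * h)
  have hmy : m ≠ y := fun h => hxy (by linear_combination 2 * h - hm2)
  have he : u * (y - x) ≠ 0 := fun h => hdne (by linear_combination 2 * h - (y - x) * hu)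
  have key : ∀ z : ZMod v,
      Multiset.card (Multiset.filter (fun a : ℕ => ({x, y} : Finset (ZMod v)) ⊆ blk z (a : ZMod v))
        (Multiset.Icc 1 ((v - 1) / 2)))
      = (if z = x ∨ z = y ∨ z = m then 1 else 0) := by
    intro z
    show ((Finset.Icc 1 ((v - 1) / 2)).filter
      (fun a : ℕ => ({x, y} : Finset (ZMod v)) ⊆ blk z (a : ZMod v))).card = _
    have hsub : ∀ (b : Finset (ZMod v)), ({x, y} : Finset (ZMod v)) ⊆ b ↔ x ∈ b ∧ y ∈ b := by
      intro b; simp [Finset.insert_subset_iff]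
    by_cases hzx : z = x
    · rw [if_pos (Or.inl hzx)]
      subst hzx
      apply card_one hv hodd hdne
      intro a ha
      rw [Finset.mem_Icc] at ha
      rw [hsub]
      constructor
      · rintro ⟨-, hy2⟩
        rw [mem_blk] at hy2
        rcases hy2 with h | h | h
        · exact absurd h.symm hxy
        · exact Or.inl (by linear_combination -h)
        · exact Or.inr (by linear_combination h)
      · rintro (h | h)
        · exact ⟨mem_blk.mpr (Or.inl rfl), mem_blk.mpr (Or.inr (Or.inl (by rw [h]; ring)))⟩
        · exact ⟨mem_blk.mpr (Or.inl rfl), mem_blk.mpr (Or.inr (Or.inr (by rw [h]; ring)))⟩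
    · by_cases hzy : z = y
      · rw [if_pos (Or.inr (Or.inl hzy))]
        subst hzy
        apply card_one hv hodd hdne
        intro a ha
        rw [Finset.mem_Icc] at ha
        rw [hsub]
        constructor
        · rintro ⟨hx2, -⟩
          rw [mem_blk] at hx2
          rcases hx2 with h | h | h
          · exact absurd h.symm (Ne.symm hxy)
          · exact Or.inr (by linear_combination -h)
          · exact Or.inl (by linear_combination h)
        · rintro (h | h)
          · exact ⟨mem_blk.mpr (Or.inr (Or.inr (by rw [h]; ring))), mem_blk.mpr (Or.inl rfl)⟩
          · exact ⟨mem_blk.mpr (Or.inr (Or.inl (by rw [h]; ring))), mem_blk.mpr (Or.inl rfl)⟩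
      · by_cases hzm : z = m
        · rw [if_pos (Or.inr (Or.inr hzm))]
          subst hzm
          apply card_one hv hodd he
          intro a ha
          rw [Finset.mem_Icc] at ha
          rw [hsub]
          have hyblk : y = m + u * (y - x) := by linear_combination -hm - y * hu
          have hxblk : x = m - u * (y - x) := by linear_combination -hm - x * hu
          constructor
          · rintro ⟨hx2, -⟩
            rw [mem_blk] at hx2
            rcases hx2 with h | h | h
            · exact absurd h.symm hmx
            · exact Or.inr (by linear_combination -h - hm - x * hu)
            · exact Or.inl (by linear_combination h + hm + x * hu)
          · rintro (h | h)
            · exact ⟨mem_blk.mpr (Or.inr (Or.inr (by rw [h]; exact hxblk))),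
                mem_blk.mpr (Or.inr (Or.inl (by rw [h]; exact hyblk)))⟩
            · exact ⟨mem_blk.mpr (Or.inr (Or.inl (by rw [h]; linear_combination -hm - x * hu))),
                mem_blk.mpr (Or.inr (Or.inr (by rw [h]; linear_combination -hm - y * hu)))⟩
        · rw [if_neg (by tauto)]
          rw [Finset.card_eq_zero, Finset.filter_eq_empty_iff]
          intro a ha hsub2
          rw [Finset.mem_Icc] at ha
          rw [hsub] at hsub2
          obtain ⟨hx2, hy2⟩ := hsub2
          rw [mem_blk] at hx2 hy2
          rcases hx2 with h | h | h
          · exact hzx h.symm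
          · rcases hy2 with h' | h' | h'
            · exact hzy h'.symm
            · exact hxy (by linear_combination h - h')
            · exact hzm (by linear_combination -u * h - u * h' - hm - z * hu)
          · rcases hy2 with h' | h' | h'
            · exact hzy h'.symm
            · exact hzm (by linear_combination -u * h - u * h' - hm - z * hu)
            · exact hxy (by linear_combination h - h')
  rw [kramer_eq_bind, countP_bind]
  simp only [Multiset.countP_map]
  refine Eq.trans (congrArg Multiset.sum (Multiset.map_congr rfl (fun k _ => key ((k : ZMod v))))) ?_
  rw [show (fun k : ℕ => if (k : ZMod v) = x ∨ (k : ZMod v) = y ∨ (k : ZMod v) = m then 1 else 0)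
      = (fun z : ZMod v => if z = x ∨ z = y ∨ z = m then 1 else 0) ∘ (Nat.cast : ℕ → ZMod v)
      from rfl, ← Multiset.map_map, range_map_cast (by omega), ← Finset.sum_eq_multiset_sum]
  have hmem : ∀ z : ZMod v, (z = x ∨ z = y ∨ z = m) ↔ z ∈ ({x, y, m} : Finset (ZMod v)) := by
    intro z; simp
  calc (∑ z : ZMod v, if z = x ∨ z = y ∨ z = m then 1 else 0)
      = ∑ z : ZMod v, if z ∈ ({x, y, m} : Finset (ZMod v)) then 1 else 0 :=
        Finset.sum_congr rfl (fun z _ => if_congr (hmem z) rfl rfl)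
    _ = ({x, y, m} : Finset (ZMod v)).card := by
        rw [← Finset.card_filter, Finset.filter_univ_mem]
    _ = 3 := by
        rw [Finset.card_insert_of_notMem (by simp [hxy, Ne.symm hmx]),
          Finset.card_insert_of_notMem (by simp [Ne.symm hmy]), Finset.card_singleton]


lemma kramer_nodup (hv : 5 ≤ v) (hodd : v % 2 = 1) {u w : ZMod v}
    (hu : (2 : ZMod v) * u = 1) (hw : (3 : ZMod v) * w = 1) :
    (kramerBlocks v).Nodup := by
  rw [kramer_eq_bind, Multiset.nodup_bind]
  have hblk : ∀ (a : ℕ), 1 ≤ a → a ≤ (v - 1) / 2 → ((a : ZMod v) ≠ 0 ∧ 2 * (a : ZMod v) ≠ 0) :=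
    fun a h1 h2 => ⟨natCast_ne_zero (by omega) (by omega),
      fun h => natCast_ne_zero (a := a) (by omega) (by omega) (cancel2 hu h)⟩
  constructor
  · intro k hk
    refine Multiset.Nodup.map_on ?_ (Finset.Icc 1 ((v - 1) / 2)).nodup
    intro a ha b hb h
    rw [Multiset.mem_Icc] at ha hb
    obtain ⟨ha0, h2a⟩ := hblk a ha.1 ha.2
    rcases blk_param ha0 h with h1 | h1
    · exact cast_inj (by omega) (by omega) (by omega) h1
    · exfalso
      have : ((a + b : ℕ) : ZMod v) = 0 := by push_cast; rw [h1]; ring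
      rw [ZMod.natCast_eq_zero_iff] at this
      have := Nat.le_of_dvd (by omega) this
      omega
  · refine ⟨List.range v, rfl, ?_⟩
    rw [List.pairwise_iff_getElem]
    intro i j hi hj hij
    simp only [List.length_range] at hi hj
    rw [List.getElem_range, List.getElem_range]
    rw [Function.onFun, Multiset.disjoint_left]
    intro b hb hb'
    rw [Multiset.mem_map] at hb hb'
    obtain ⟨a, ha, hba⟩ := hb
    obtain ⟨a', ha', hba'⟩ := hb'
    rw [Multiset.mem_Icc] at ha ha'
    obtain ⟨ha0, h2a⟩ := hblk a ha.1 ha.2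
    obtain ⟨ha0', h2a'⟩ := hblk a' ha'.1 ha'.2
    have hk : ((i : ZMod v)) = (j : ZMod v) :=
      blk_middle hw ha0 h2a ha0' h2a' (hba.trans hba'.symm)
    have := cast_inj (v := v) (by omega) (by omega) (by omega) hk
    omega

lemma kramer_cyclic (hv : 5 ≤ v) : IsCyclicDesign v (kramerBlocks v) := by
  rw [IsCyclicDesign, kramer_eq_bind, Multiset.map_bind]
  have himg : ∀ (z α : ZMod v), Finset.image (fun x => x + 1) (blk z α) = blk (z + 1) α := by
    intro z α
    rw [blk, blk, Finset.image_insert, Finset.image_insert, Finset.image_singleton]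
    have e1 : z + α + 1 = z + 1 + α := by ring
    have e2 : z - α + 1 = z + 1 - α := by ring
    rw [e1, e2]
  simp only [Multiset.map_map]
  have hcomp : ∀ k : ℕ, k ∈ Multiset.range v →
      Multiset.map ((fun b => Finset.image (fun x => x + 1) b) ∘ fun a : ℕ => blk (k : ZMod v) (a : ZMod v))
        (Multiset.Icc 1 ((v - 1) / 2))
      = Multiset.map (fun a : ℕ => blk ((k : ZMod v) + 1) (a : ZMod v)) (Multiset.Icc 1 ((v - 1) / 2)) := by
    intro k _
    apply Multiset.map_congr rfl
    intro a _
    exact himg _ _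
  rw [Multiset.bind_congr hcomp]
  haveI : NeZero v := ⟨by omega⟩
  have hsplit : ∀ g : ZMod v → Multiset (Finset (ZMod v)),
      (Multiset.range v).bind (fun k : ℕ => g ((k : ZMod v))) = Finset.univ.val.bind g := by
    intro g
    rw [← range_map_cast (v := v) (by omega), Multiset.bind_map]
  rw [hsplit (fun z => Multiset.map (fun a : ℕ => blk (z + 1) (a : ZMod v)) (Multiset.Icc 1 ((v - 1) / 2))),
    hsplit (fun z => Multiset.map (fun a : ℕ => blk z (a : ZMod v)) (Multiset.Icc 1 ((v - 1) / 2)))]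
  have huniv : Finset.univ.val.map (fun z : ZMod v => z + 1) = Finset.univ.val := by
    have h1 := Finset.map_univ_equiv (Equiv.addRight (1 : ZMod v))
    have h2 := congrArg Finset.val h1
    rw [Finset.map_val] at h2
    convert h2 using 2
    rfl
  calc Finset.univ.val.bind (fun z : ZMod v =>
        Multiset.map (fun a : ℕ => blk (z + 1) (a : ZMod v)) (Multiset.Icc 1 ((v - 1) / 2)))
      = (Finset.univ.val.map (fun z : ZMod v => z + 1)).bind
          (fun z : ZMod v => Multiset.map (fun a : ℕ => blk z (a : ZMod v)) (Multiset.Icc 1 ((v - 1) / 2))) := by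
        rw [Multiset.bind_map]
    _ = Finset.univ.val.bind
          (fun z : ZMod v => Multiset.map (fun a : ℕ => blk z (a : ZMod v)) (Multiset.Icc 1 ((v - 1) / 2))) := by
        rw [huniv]


lemma kramer_indecomposable (hv : 5 ≤ v) (hmod : v % 6 = 1 ∨ v % 6 = 5) :
    ¬ ∃ B₁ B₂ : Multiset (Finset (ZMod v)),
      kramerBlocks v = B₁ + B₂ ∧ IsTS v 1 B₁ ∧ IsTS v 2 B₂ := by
  haveI : NeZero v := ⟨by omega⟩
  haveI : Fact (1 < v) := ⟨by omega⟩
  classical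
  have h2unit : IsUnit (2 : ZMod v) := by
    have := (ZMod.isUnit_iff_coprime 2 v).mpr
      ((Nat.Prime.coprime_iff_not_dvd Nat.prime_two).mpr (by omega))
    simpa using this
  have h3unit : IsUnit (3 : ZMod v) := by
    have := (ZMod.isUnit_iff_coprime 3 v).mpr
      ((Nat.Prime.coprime_iff_not_dvd Nat.prime_three).mpr (by omega))
    simpa using this
  obtain hu := ZMod.mul_inv_of_unit 2 h2unit
  obtain hw := ZMod.mul_inv_of_unit 3 h3unit
  set u : ZMod v := (2 : ZMod v)⁻¹
  set w : ZMod v := (3 : ZMod v)⁻¹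
  rintro ⟨B₁, B₂, hsum, h1, -⟩
  have hmem1 : ∀ b ∈ B₁, ∃ k α : ZMod v, α ≠ 0 ∧ b = blk k α := fun b hb =>
    mem_kramer hv (by rw [hsum]; exact Multiset.mem_add.mpr (Or.inl hb))
  set mf : ZMod v → ℕ := fun δ => B₁.countP (fun b => ∃ k : ZMod v, b = blk k δ) with hmf
  have KEY : ∀ δ : ZMod v, δ ≠ 0 → 2 * mf δ + mf (u * δ) = v := by
    intro δ hδ
    have huδ : u * δ ≠ 0 := fun h => hδ (by linear_combination 2 * h - δ * hu)
    have hpair : ∀ x : ZMod v, B₁.countP (fun b => x ∈ b ∧ x + δ ∈ b) = 1 := by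
      intro x
      have hc2 : ({x, x + δ} : Finset (ZMod v)).card = 2 := by
        rw [Finset.card_insert_of_notMem (by
          simp only [Finset.mem_singleton]
          intro h
          exact hδ (by linear_combination -h)), Finset.card_singleton]
      have hTS := h1.2 _ hc2
      rw [← hTS]
      apply Multiset.countP_congr rfl
      intro b _
      apply propext
      simp [Finset.insert_subset_iff]
    have hL : (∑ x : ZMod v, B₁.countP (fun b => x ∈ b ∧ x + δ ∈ b)) = v := by
      rw [Finset.sum_congr rfl (fun x _ => hpair x)]
      simp [Finset.card_univ, ZMod.card]
    rw [sum_countP] at hL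
    have hmap : ∀ b ∈ B₁, (Finset.univ.filter (fun x => x ∈ b ∧ x + δ ∈ b)).card
        = 2 * (if (∃ k : ZMod v, b = blk k δ) then 1 else 0)
          + (if (∃ k : ZMod v, b = blk k (u * δ)) then 1 else 0) := by
      intro b hb
      obtain ⟨k, α, hα, rfl⟩ := hmem1 b hb
      have h2α : 2 * α ≠ 0 := fun h => hα (cancel2 hu h)
      have h3α : 3 * α ≠ 0 := fun h => hα (cancel3 hw h)
      rw [blk_pair_count hu hα h2α h3α hδ]
      have E1 : (∃ k' : ZMod v, blk k α = blk k' δ) ↔ (δ = α ∨ δ = -α) :=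
        ex_rep_iff hu hw hα h2α hδ
      have E2 : (∃ k' : ZMod v, blk k α = blk k' (u * δ)) ↔ (δ = 2 * α ∨ δ = -(2 * α)) := by
        rw [ex_rep_iff hu hw hα h2α huδ]
        constructor
        · rintro (h | h)
          · exact Or.inl (by linear_combination 2 * h - δ * hu)
          · exact Or.inr (by linear_combination 2 * h - δ * hu)
        · rintro (h | h)
          · exact Or.inl (by linear_combination u * h + α * hu)
          · exact Or.inr (by linear_combination u * h - α * hu)
      rw [if_congr E1.symm rfl rfl, if_congr E2.symm rfl rfl]
      by_cases hC1 : ∃ k' : ZMod v, blk k α = blk k' δ <;>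
        by_cases hC2 : ∃ k' : ZMod v, blk k α = blk k' (u * δ) <;>
        simp [hC1, hC2]
    rw [Multiset.map_congr rfl hmap] at hL
    have hsplit : (B₁.map (fun b => 2 * (if (∃ k : ZMod v, b = blk k δ) then 1 else 0)
          + (if (∃ k : ZMod v, b = blk k (u * δ)) then 1 else 0))).sum
        = 2 * mf δ + mf (u * δ) := by
      rw [Multiset.sum_map_add]
      congr 1
      · rw [Multiset.sum_map_mul_left]
        rw [sum_map_ite]
      · rw [sum_map_ite]
    rw [hsplit] at hL
    exact hL
  -- iterate the recurrence
  have hpowne : ∀ (j : ℕ), ((2 : ZMod v) ^ j * 1 : ZMod v) ≠ 0 := by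
    intro j
    induction j with
    | zero => simpa using (one_ne_zero : (1 : ZMod v) ≠ 0)
    | succ j ih =>
      intro h
      apply ih
      apply cancel2 hu
      rw [show (2 : ZMod v) * ((2 : ZMod v) ^ j * 1) = (2 : ZMod v) ^ (j + 1) * 1 from by ring, h]
  have hrec : ∀ δ : ZMod v, δ ≠ 0 → (mf δ : ℤ) = v - 2 * mf (2 * δ) := by
    intro δ hδ
    have h2δ : (2 : ZMod v) * δ ≠ 0 := fun h => hδ (cancel2 hu h)
    have h := KEY (2 * δ) h2δ
    rw [show u * (2 * δ) = δ from by linear_combination δ * hu] at h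
    omega
  have hclaim : ∀ j : ℕ, 3 * (mf 1 : ℤ)
      = v * (1 - (-2) ^ j) + (-2) ^ j * (3 * mf ((2 : ZMod v) ^ j * 1)) := by
    intro j
    induction j with
    | zero => simp
    | succ j ih =>
      have hr := hrec _ (hpowne j)
      rw [show (2 : ZMod v) * ((2 : ZMod v) ^ j * 1) = (2 : ZMod v) ^ (j + 1) * 1 from by ring] at hr
      linear_combination ih + 3 * (-2 : ℤ) ^ j * hr
  have ht : 0 < Nat.totient v := Nat.totient_pos.mpr (by omega)
  have h2t : (2 : ZMod v) ^ Nat.totient v = 1 := by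
    have hc : Nat.Coprime 2 v := (Nat.Prime.coprime_iff_not_dvd Nat.prime_two).mpr (by omega)
    have hmodeq := Nat.ModEq.pow_totient hc
    have := (ZMod.natCast_eq_natCast_iff _ _ _).mpr hmodeq
    push_cast at this
    exact this
  have hfin := hclaim (Nat.totient v)
  rw [h2t, one_mul] at hfin
  have hfac : ((1 : ℤ) - (-2) ^ Nat.totient v) * (3 * (mf 1 : ℤ) - v) = 0 := by
    linear_combination hfin
  rcases mul_eq_zero.mp hfac with h | h
  · have habs : ((-2 : ℤ)) ^ Nat.totient v = 1 := by linarith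
    have h1 : |((-2 : ℤ)) ^ Nat.totient v| = 1 := by rw [habs]; rfl
    rw [abs_pow, abs_neg] at h1
    have h2 : (2 : ℤ) ^ 1 ≤ 2 ^ Nat.totient v := pow_le_pow_right₀ (by norm_num) ht
    simp only [abs_two] at h1
    omega
  · have h3 : 3 * (mf 1 : ℤ) = v := by linarith
    omega

end Kramer

theorem kramer_TS3_cyclic_simple_indecomposable (v : ℕ) (hv : 5 ≤ v)
    (hmod : v % 6 = 1 ∨ v % 6 = 5) :
    IsTS v 3 (kramerBlocks v) ∧ (kramerBlocks v).Nodup ∧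
    IsCyclicDesign v (kramerBlocks v) ∧
    ¬ ∃ B₁ B₂ : Multiset (Finset (ZMod v)),
      kramerBlocks v = B₁ + B₂ ∧ IsTS v 1 B₁ ∧ IsTS v 2 B₂ := by
  haveI : NeZero v := ⟨by omega⟩
  have hodd : v % 2 = 1 := by omega
  have h2unit : IsUnit (2 : ZMod v) := by
    have := (ZMod.isUnit_iff_coprime 2 v).mpr
      ((Nat.Prime.coprime_iff_not_dvd Nat.prime_two).mpr (by omega))
    simpa using this
  have h3unit : IsUnit (3 : ZMod v) := by
    have := (ZMod.isUnit_iff_coprime 3 v).mpr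
      ((Nat.Prime.coprime_iff_not_dvd Nat.prime_three).mpr (by omega))
    simpa using this
  obtain hu := ZMod.mul_inv_of_unit 2 h2unit
  obtain hw := ZMod.mul_inv_of_unit 3 h3unit
  refine ⟨⟨?_, ?_⟩, ?_, ?_, Kramer.kramer_indecomposable hv hmod⟩
  · intro b hb
    obtain ⟨k, α, hα, rfl⟩ := Kramer.mem_kramer hv hb
    exact Kramer.blk_card hα (fun h => hα (Kramer.cancel2 hu h))
  · intro p hp
    obtain ⟨x, y, hxy, rfl⟩ := Finset.card_eq_two.mp hp
    exact Kramer.count_three hv hodd hu hxy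
  · exact Kramer.kramer_nodup hv hodd hu hw
  · exact Kramer.kramer_cyclic hv
end

section
/- Let v ≥ 5 with v ≡ 1 or 5 (mod 6). If 1 ≤ α₁, α₂ ≤ (v−1)/2, k₁, k₂ ∈ ZMod v, and {k₁, k₁ + α₁, k₁ − α₁} = {k₂, k₂ + α₂, k₂ − α₂} as subsets of ZMod v, then α₁ = α₂ and k₁ = k₂. In other words, the blocks {k, k + α, k − α} (1 ≤ α ≤ (v−1)/2, k ∈ ZMod v) are pairwise distinct, so the cyclic three-fold triple system they form is simple. -/
theorem kramer_blocks_pairwise_distinct (v : ℕ) (hv : 5 ≤ v)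
    (hmod : v % 6 = 1 ∨ v % 6 = 5)
    (α₁ α₂ : ℕ) (hα₁ : 1 ≤ α₁) (hα₁' : α₁ ≤ (v - 1) / 2)
    (hα₂ : 1 ≤ α₂) (hα₂' : α₂ ≤ (v - 1) / 2) (k₁ k₂ : ZMod v)
    (heq : ({k₁, k₁ + (α₁ : ZMod v), k₁ - (α₁ : ZMod v)} : Finset (ZMod v)) =
           ({k₂, k₂ + (α₂ : ZMod v), k₂ - (α₂ : ZMod v)} : Finset (ZMod v))) :
    α₁ = α₂ ∧ k₁ = k₂ := by
  have hvodd : v % 2 = 1 := by omega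
  have h2a1 : 2 * α₁ < v := by omega
  have h2a2 : 2 * α₂ < v := by omega
  haveI : NeZero v := ⟨by omega⟩
  have hz : ∀ α : ℕ, 1 ≤ α → 2 * α < v → (α : ZMod v) ≠ 0 := by
    intro α h1 h2 h
    rw [ZMod.natCast_eq_zero_iff] at h
    have := Nat.le_of_dvd (by omega) h
    omega
  have h2z : ∀ α : ℕ, 1 ≤ α → 2 * α < v → (α : ZMod v) + (α : ZMod v) ≠ 0 := by
    intro α h1 h2 h
    have h' : ((α + α : ℕ) : ZMod v) = 0 := by push_cast; exact h
    rw [ZMod.natCast_eq_zero_iff] at h'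
    have := Nat.le_of_dvd (by omega) h'
    omega
  have ha1 := hz α₁ hα₁ h2a1
  have ha2 := hz α₂ hα₂ h2a2
  have haa1 := h2z α₁ hα₁ h2a1
  have haa2 := h2z α₂ hα₂ h2a2
  have hsum : ∀ (k a : ZMod v), a ≠ 0 → a + a ≠ 0 →
      ({k, k + a, k - a} : Finset (ZMod v)).sum id = k + k + k := by
    intro k a ha haa
    have h1 : k ∉ ({k + a, k - a} : Finset (ZMod v)) := by
      simp only [Finset.mem_insert, Finset.mem_singleton]
      push_neg
      constructor
      · intro h; exact ha (by linear_combination -h)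
      · intro h; exact ha (by linear_combination h)
    have h2 : (k + a) ∉ ({k - a} : Finset (ZMod v)) := by
      simp only [Finset.mem_singleton]
      intro h; exact haa (by linear_combination h)
    rw [Finset.sum_insert h1, Finset.sum_insert h2, Finset.sum_singleton]
    simp only [id]
    ring
  -- k₁ = k₂ via sums
  have hk : k₁ = k₂ := by
    have hs : k₁ + k₁ + k₁ = k₂ + k₂ + k₂ := by
      rw [← hsum k₁ _ ha1 haa1, ← hsum k₂ _ ha2 haa2, heq]
    have h3 : IsUnit ((3 : ℕ) : ZMod v) := by
      rw [ZMod.isUnit_iff_coprime]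
      exact (Nat.prime_three.coprime_iff_not_dvd).mpr (by omega)
    have : ((3 : ℕ) : ZMod v) * k₁ = ((3 : ℕ) : ZMod v) * k₂ := by
      push_cast
      linear_combination hs
    exact h3.mul_left_cancel this
  subst hk
  refine ⟨?_, rfl⟩
  have hmem : k₁ + (α₁ : ZMod v) ∈
      ({k₁, k₁ + (α₂ : ZMod v), k₁ - (α₂ : ZMod v)} : Finset (ZMod v)) := by
    rw [← heq]
    simp
  simp only [Finset.mem_insert, Finset.mem_singleton] at hmem
  rcases hmem with h | h | h
  · exact absurd (by linear_combination h) ha1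
  · have : ((α₁ : ℕ) : ZMod v) = ((α₂ : ℕ) : ZMod v) := by linear_combination h
    rw [ZMod.natCast_eq_natCast_iff] at this
    have h2 : α₁ % v = α₂ % v := this
    rw [Nat.mod_eq_of_lt (by omega), Nat.mod_eq_of_lt (by omega)] at h2
    exact h2
  · exfalso
    have h' : ((α₁ + α₂ : ℕ) : ZMod v) = 0 := by push_cast; linear_combination h
    rw [ZMod.natCast_eq_zero_iff] at h'
    have := Nat.le_of_dvd (by omega) h'
    omega
end

section
/- Let (a_i, b_i), 1 ≤ i ≤ n, be a Skolem sequence of order n ≥ 1 in pair form. Suppose there do not exist indices i₁, i₂ ∈ {1, …, n} (not necessarily distinct) such that, as integers, i₁ + i₂ = b_{i₂} and b_{i₁} + i₂ = 2n + 1. Then the blocks {k, i + k, b_i + k} ⊆ ZMod (2n+1), for 1 ≤ i ≤ n and k ∈ ZMod (2n+1), are pairwise distinct for distinct pairs (i, k); i.e., the developed cyclic three-fold triple system has no repeated block. -/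
private lemma zcast_eq {n x y : ℕ} (hx : x ≤ 2*n) (hy : y ≤ 2*n)
    (h : (x : ZMod (2*n+1)) = (y : ZMod (2*n+1))) : x = y := by
  have hm := (ZMod.natCast_eq_natCast_iff x y (2*n+1)).1 h
  unfold Nat.ModEq at hm
  rw [Nat.mod_eq_of_lt (by omega), Nat.mod_eq_of_lt (by omega)] at hm
  exact hm

private lemma zcast_zero {n x : ℕ} (h1 : 1 ≤ x) (h4 : x ≤ 4*n)
    (h : (x : ZMod (2*n+1)) = 0) : x = 2*n+1 := by
  haveI : NeZero (2*n+1) := ⟨by omega⟩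
  have hd : (2*n+1) ∣ x := (ZMod.natCast_eq_zero_iff x (2*n+1)).1 h
  obtain ⟨c, hc⟩ := hd
  have hc2 : c < 2 := by nlinarith
  interval_cases c <;> omega

private lemma zcast_ne_zero {n x : ℕ} (h1 : 1 ≤ x) (h2 : x ≤ 2*n) :
    (x : ZMod (2*n+1)) ≠ 0 := fun h => by
  have := zcast_zero h1 (by omega) h; omega

/-- A Skolem sequence of order `n` in pair form. -/
def IsSkolem (n : ℕ) (a b : ℕ → ℕ) : Prop :=
  (∀ i ∈ Finset.Icc 1 n, a i + i = b i) ∧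
  (Finset.Icc 1 n).val.bind (fun i => {a i, b i}) = (Finset.Icc 1 (2 * n)).val

theorem no_repeated_block_of_no_solution (n : ℕ) (hn : 1 ≤ n) (a b : ℕ → ℕ)
    (hs : IsSkolem n a b)
    (hcond : ¬ ∃ i₁ ∈ Finset.Icc 1 n, ∃ i₂ ∈ Finset.Icc 1 n,
      i₁ + i₂ = b i₂ ∧ b i₁ + i₂ = 2 * n + 1) :
    ∀ i ∈ Finset.Icc 1 n, ∀ j ∈ Finset.Icc 1 n, ∀ k l : ZMod (2 * n + 1),
      ({k, (i : ZMod (2 * n + 1)) + k, (b i : ZMod (2 * n + 1)) + k} :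
          Finset (ZMod (2 * n + 1))) =
      ({l, (j : ZMod (2 * n + 1)) + l, (b j : ZMod (2 * n + 1)) + l} :
          Finset (ZMod (2 * n + 1))) →
      i = j ∧ k = l := by
  obtain ⟨hab, hbind⟩ := hs
  have hmem : ∀ x ∈ Finset.Icc 1 n, 1 ≤ a x ∧ a x ≤ 2*n ∧ 1 ≤ b x ∧ b x ≤ 2*n := by
    intro x hx
    have hA : a x ∈ (Finset.Icc 1 (2*n)).val := by
      rw [← hbind]
      exact Multiset.mem_bind.2 ⟨x, (by rw [Finset.mem_val]; exact hx), by simp⟩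
    have hB : b x ∈ (Finset.Icc 1 (2*n)).val := by
      rw [← hbind]
      exact Multiset.mem_bind.2 ⟨x, (by rw [Finset.mem_val]; exact hx), by simp⟩
    rw [Finset.mem_val, Finset.mem_Icc] at hA hB
    exact ⟨hA.1, hA.2, hB.1, hB.2⟩
  intro i hi j hj k l h
  have Hi := hmem i hi
  have Hj := hmem j hj
  have hbi := hab i hi
  have hbj := hab j hj
  have hi' := hi
  have hj' := hj
  rw [Finset.mem_Icc] at hi hj
  obtain ⟨hi1, hi2⟩ := hi
  obtain ⟨hj1, hj2⟩ := hj
  obtain ⟨hai1, hai2, hbi1, hbi2⟩ := Hi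
  obtain ⟨haj1, haj2, hbj1, hbj2⟩ := Hj
  have hk : k = l ∨ k = (j : ZMod (2*n+1)) + l ∨ k = (b j : ZMod (2*n+1)) + l := by
    have : k ∈ ({l, (j : ZMod (2*n+1)) + l, (b j : ZMod (2*n+1)) + l} :
        Finset (ZMod (2*n+1))) := by rw [← h]; simp
    simpa using this
  have hik : (i : ZMod (2*n+1)) + k = l ∨ (i : ZMod (2*n+1)) + k = (j : ZMod (2*n+1)) + l ∨
      (i : ZMod (2*n+1)) + k = (b j : ZMod (2*n+1)) + l := by
    have : (i : ZMod (2*n+1)) + k ∈ ({l, (j : ZMod (2*n+1)) + l,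
        (b j : ZMod (2*n+1)) + l} : Finset (ZMod (2*n+1))) := by rw [← h]; simp
    simpa using this
  have hbik : (b i : ZMod (2*n+1)) + k = l ∨
      (b i : ZMod (2*n+1)) + k = (j : ZMod (2*n+1)) + l ∨
      (b i : ZMod (2*n+1)) + k = (b j : ZMod (2*n+1)) + l := by
    have : (b i : ZMod (2*n+1)) + k ∈ ({l, (j : ZMod (2*n+1)) + l,
        (b j : ZMod (2*n+1)) + l} : Finset (ZMod (2*n+1))) := by rw [← h]; simp
    simpa using this
  rcases hk with hk | hk | hk
  · -- k = l
    rcases hik with hik | hik | hik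
    · -- i ≡ 0, contradiction
      exact absurd (by linear_combination hik - hk : ((i : ℕ) : ZMod (2*n+1)) = 0)
        (zcast_ne_zero (n := n) hi1 (by omega))
    · -- i ≡ j : done
      have e : ((i : ℕ) : ZMod (2*n+1)) = ((j : ℕ) : ZMod (2*n+1)) := by
        linear_combination hik - hk
      exact ⟨zcast_eq (n := n) (by omega) (by omega) e, hk⟩
    · -- i ≡ b j
      have e : i = b j := zcast_eq (n := n) (by omega) (by omega) (by linear_combination hik - hk)
      rcases hbik with hb | hb | hb
      · exact absurd (by linear_combination hb - hk : ((b i : ℕ) : ZMod (2*n+1)) = 0)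
          (zcast_ne_zero (n := n) hbi1 hbi2)
      · have e2 : b i = j := zcast_eq (n := n) (by omega) (by omega) (by linear_combination hb - hk)
        omega
      · have e2 : b i = b j := zcast_eq (n := n) (by omega) (by omega) (by linear_combination hb - hk)
        omega
  · -- k = j + l
    rcases hik with hik | hik | hik
    · -- i + j ≡ 0
      have e : ((i + j : ℕ) : ZMod (2*n+1)) = 0 := by push_cast; linear_combination hik - hk
      have := zcast_zero (n := n) (by omega) (by omega) e
      omega
    · -- i ≡ 0
      exact absurd (by linear_combination hik - hk : ((i : ℕ) : ZMod (2*n+1)) = 0)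
        (zcast_ne_zero (n := n) hi1 (by omega))
    · -- i + j ≡ b j
      have e : i + j = b j := zcast_eq (n := n) (by omega) (by omega)
        (by push_cast; linear_combination hik - hk)
      rcases hbik with hb | hb | hb
      · -- b i + j ≡ 0 : forbidden condition
        have e2 : ((b i + j : ℕ) : ZMod (2*n+1)) = 0 := by
          push_cast; linear_combination hb - hk
        have e3 : b i + j = 2*n+1 := zcast_zero (n := n) (by omega) (by omega) e2
        exact absurd ⟨i, hi', j, hj', e, e3⟩ hcond
      · -- b i ≡ 0
        exact absurd (by linear_combination hb - hk : ((b i : ℕ) : ZMod (2*n+1)) = 0)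
          (zcast_ne_zero (n := n) hbi1 hbi2)
      · -- b i + j ≡ b j = i + j ⇒ b i = i
        have ec : ((i + j : ℕ) : ZMod (2*n+1)) = ((b j : ℕ) : ZMod (2*n+1)) := by rw [e]
        have e2 : b i = i := zcast_eq (n := n) (by omega) (by omega)
          (by push_cast at ec ⊢; linear_combination hb - hk - ec)
        omega
  · -- k = b j + l
    rcases hik with hik | hik | hik
    · -- i + b j ≡ 0
      have e : i + b j = 2*n+1 := zcast_zero (n := n) (by omega) (by omega)
        (by push_cast; linear_combination hik - hk)
      rcases hbik with hb | hb | hb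
      · -- b i + b j ≡ 0 ⇒ b i ≡ i
        have e2 : b i + b j = 2*n+1 := zcast_zero (n := n) (by omega) (by omega)
          (by push_cast; linear_combination hb - hk)
        omega
      · -- b i + b j ≡ j ⇒ b i = i + j : forbidden with (j, i)
        have e2 : i + j = b i := zcast_eq (n := n) (by omega) (by omega)
          (by push_cast; linear_combination hik - hb)
        have e3 : j + i = b i := by omega
        have e4 : b j + i = 2*n+1 := by omega
        exact absurd ⟨j, hj', i, hi', e3, e4⟩ hcond
      · -- b i ≡ 0
        exact absurd (by linear_combination hb - hk : ((b i : ℕ) : ZMod (2*n+1)) = 0)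
          (zcast_ne_zero (n := n) hbi1 hbi2)
    · -- i + b j ≡ j ⇒ i + a j ≡ 0
      have e : ((i + a j : ℕ) : ZMod (2*n+1)) = 0 := by
        have : ((a j + j : ℕ) : ZMod (2*n+1)) = ((b j : ℕ) : ZMod (2*n+1)) := by
          rw [hbj]
        push_cast at this ⊢
        linear_combination hik - hk + this
      have e1 : i + a j = 2*n+1 := zcast_zero (n := n) (by omega) (by omega) e
      rcases hbik with hb | hb | hb
      · -- b i + b j ≡ 0
        have e2 : b i + b j = 2*n+1 := zcast_zero (n := n) (by omega) (by omega)
          (by push_cast; linear_combination hb - hk)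
        omega
      · -- b i + b j ≡ j ⇒ b i + a j ≡ 0 ⇒ b i + a j = 2n+1 = i + a j ⇒ b i = i
        have e2 : ((b i + a j : ℕ) : ZMod (2*n+1)) = 0 := by
          have : ((a j + j : ℕ) : ZMod (2*n+1)) = ((b j : ℕ) : ZMod (2*n+1)) := by
            rw [hbj]
          push_cast at this ⊢
          linear_combination hb - hk + this
        have e3 : b i + a j = 2*n+1 := zcast_zero (n := n) (by omega) (by omega) e2
        omega
      · -- b i ≡ 0
        exact absurd (by linear_combination hb - hk : ((b i : ℕ) : ZMod (2*n+1)) = 0)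
          (zcast_ne_zero (n := n) hbi1 hbi2)
    · -- i ≡ 0
      exact absurd (by linear_combination hik - hk : ((i : ℕ) : ZMod (2*n+1)) = 0)
        (zcast_ne_zero (n := n) hi1 (by omega))
end
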